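/- Let G be a topological group acting continuously on a topological space X, and acting continuously and freely on a space P such that τ : P → B = P/G is a locally trivial principal G-bundle. Let r ≥ 2 and assume the orbit space (X^r × P)/G of the diagonal G-action is a normal space. Let ρ_r ×_G 1 : (C([0,1],X) × P)/G → (X^r × P)/G denote the continuous map induced on the orbit spaces of the diagonal G-actions by ρ_r × id_P. Then TC^w_{r,G}(X;P) ≤ secat[ρ_r ×_G 1] ≤ secat[τ : P → B] + TC^w_{r,G}(X;P). (Under the canonical identifications E^I_B ≅ (C([0,1],X) × P)/G and E^r_B ≅ (X^r × P)/G for the associated bundle p : E = X ×_G P → B, the middle term is the sequential parametrized topological complexity TC_r[p : E → B], and secat[τ] equals G-cat[p : E → B].) -/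

import Mathlib

set_option linter.unusedSectionVars false
set_option maxHeartbeats 1000000

open scoped unitInterval

/-- The sectional category of a continuous map `p : E → B`. -/
noncomputable def secat {E B : Type*} [TopologicalSpace E] [TopologicalSpace B]
    (p : C(E, B)) : ℕ∞ :=
  sInf {n : ℕ∞ | ∃ m : ℕ, n = m ∧ ∃ U : Fin (m + 1) → Set B,
    (∀ i, IsOpen (U i)) ∧ (⋃ i, U i) = Set.univ ∧
    ∀ i, ∃ s : C((U i : Set B), E), ∀ x, p (s x) = (x : B)}

/-- The relative sectional category `secat_f[p : E → B]` for `f : B → C`. -/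
noncomputable def secatf {E B C : Type*} [TopologicalSpace E] [TopologicalSpace B]
    [TopologicalSpace C] (p : C(E, B)) (f : C(B, C)) : ℕ∞ :=
  sInf {n : ℕ∞ | ∃ m : ℕ, n = m ∧ ∃ U : Fin (m + 1) → Set C,
    (∀ i, IsOpen (U i)) ∧ Set.range f ⊆ (⋃ i, U i) ∧
    ∀ i, ∃ s : C((⇑f ⁻¹' U i : Set B), E), ∀ x, p (s x) = (x : B)}

/-- The evaluation map `ρ_r : C([0,1], X) → X^r`, `γ ↦ (γ (t 0), …, γ (t (r-1)))`. -/
noncomputable def pathEval (X : Type*) [TopologicalSpace X] {r : ℕ}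
    (t : Fin r → unitInterval) : C(C(unitInterval, X), Fin r → X) :=
  ⟨fun γ i => γ (t i), continuous_pi fun i => ContinuousEvalConst.continuous_eval_const (t i)⟩

/-- The orbit quotient map `X → X/G` as a continuous map. -/
noncomputable def orbitQuotMap (G X : Type*) [Group G] [MulAction G X]
    [TopologicalSpace X] : C(X, Quotient (MulAction.orbitRel G X)) :=
  ⟨Quotient.mk _, continuous_quotient_mk'⟩

/-- The continuous map induced on orbit spaces by a `G`-equivariant continuous map. -/
noncomputable def inducedQuotMap {G A B : Type*} [Group G] [TopologicalSpace A]
    [TopologicalSpace B] [MulAction G A] [MulAction G B]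
    (F : C(A, B)) (hF : ∀ (g : G) (a : A), F (g • a) = g • F a) :
    C(Quotient (MulAction.orbitRel G A), Quotient (MulAction.orbitRel G B)) :=
  ⟨Quotient.map' F (fun a b hab => by
      obtain ⟨g, hg⟩ := MulAction.mem_orbit_iff.mp (MulAction.orbitRel_apply.mp hab)
      exact MulAction.orbitRel_apply.mpr
        (MulAction.mem_orbit_iff.mpr ⟨g, by rw [← hg, hF]⟩)),
    F.continuous.quotient_map' _⟩

/-! ### Auxiliary lemmas -/

section normality

lemma exists_cover_functions {B : Type*} [TopologicalSpace B] [NormalSpace B] {N : ℕ}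
    (U : Fin N → Set B) (ho : ∀ i, IsOpen (U i)) (hc : (⋃ i, U i) = Set.univ) :
    ∃ f : Fin N → C(B, ℝ), (∀ i x, 0 ≤ f i x) ∧ (∀ i x, 0 < f i x → x ∈ U i) ∧
      (∀ x, ∃ i, 0 < f i x) := by
  obtain ⟨v, hvc, hvo, hvcl⟩ := exists_subset_iUnion_closure_subset (s := Set.univ)
    isClosed_univ ho (fun x _ => Set.toFinite _) (by rw [hc])
  have hf : ∀ i : Fin N, ∃ f : C(B, ℝ), Set.EqOn ⇑f 0 (U i)ᶜ ∧ Set.EqOn ⇑f 1 (closure (v i)) ∧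
      ∀ x, f x ∈ Set.Icc (0:ℝ) 1 := by
    intro i
    exact exists_continuous_zero_one_of_isClosed (ho i).isClosed_compl isClosed_closure
      (Set.disjoint_left.mpr fun x hx hx2 => hx (hvcl i hx2))
  choose f hf0 hf1 hf01 using hf
  refine ⟨f, fun i x => (hf01 i x).1, fun i x hx => ?_, fun x => ?_⟩
  · by_contra hxu
    have := hf0 i hxu
    simp only [Pi.zero_apply] at this
    rw [this] at hx
    exact lt_irrefl _ hx
  · obtain ⟨i, hi⟩ := Set.mem_iUnion.mp (hvc (Set.mem_univ x))
    refine ⟨i, ?_⟩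
    have := hf1 i (subset_closure hi)
    simp only [Pi.one_apply] at this
    rw [this]
    exact one_pos

lemma exists_max_idx {N : ℕ} (v : Fin (N + 1) → ℝ) :
    ∃ i, (∀ a, v a ≤ v i) ∧ ∀ a, i < a → v a < v i := by
  classical
  set s : Finset (Fin (N + 1)) := Finset.univ.filter (fun i => ∀ a, v a ≤ v i) with hs
  have hne : s.Nonempty := by
    obtain ⟨x, -, hx⟩ := Finset.exists_max_image Finset.univ v ⟨0, Finset.mem_univ 0⟩
    exact ⟨x, Finset.mem_filter.mpr ⟨Finset.mem_univ _, fun a => hx a (Finset.mem_univ a)⟩⟩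
  set i := s.max' hne with hi
  have himem : i ∈ s := s.max'_mem hne
  have hmax : ∀ a, v a ≤ v i := (Finset.mem_filter.mp himem).2
  refine ⟨i, hmax, fun a ha => ?_⟩
  rcases lt_or_eq_of_le (hmax a) with h | h
  · exact h
  · exfalso
    have : a ∈ s := Finset.mem_filter.mpr ⟨Finset.mem_univ _, fun b => (hmax b).trans h.ge⟩
    exact absurd (s.le_max' a this) (not_le.mpr ha)

/-- Glue sections over pairwise disjoint open sets. -/
lemma glue_sections {B T : Type*} [TopologicalSpace B] [TopologicalSpace T]
    (q : T → B) {ι : Type} (V : ι → Set B) (ho : ∀ i, IsOpen (V i))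
    (hd : Pairwise (Function.onFun Disjoint V))
    (hs : ∀ i, ∃ s : C(↥(V i), T), ∀ x, q (s x) = x.1) :
    ∃ s : C(↥(⋃ i, V i), T), ∀ x, q (s x) = x.1 := by
  classical
  choose s hsec using hs
  have hmem : ∀ x : ↥(⋃ i, V i), ∃ i, x.1 ∈ V i := fun x => Set.mem_iUnion.mp x.2
  have huniq : ∀ (x : B) (i j : ι), x ∈ V i → x ∈ V j → i = j := by
    intro x i j hi hj
    by_contra hne
    exact Set.disjoint_left.mp (hd hne) hi hj
  refine ⟨⟨fun x => s (hmem x).choose ⟨x.1, (hmem x).choose_spec⟩, ?_⟩,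
    fun x => hsec _ _⟩
  rw [continuous_iff_continuousAt]
  intro x
  obtain ⟨i, hi⟩ := hmem x
  have hNo : IsOpen {y : ↥(⋃ i, V i) | y.1 ∈ V i} := (ho i).preimage continuous_subtype_val
  apply ContinuousOn.continuousAt (s := {y : ↥(⋃ i, V i) | y.1 ∈ V i}) ?_ (hNo.mem_nhds hi)
  rw [continuousOn_iff_continuous_restrict]
  have key : {y : ↥(⋃ i, V i) | y.1 ∈ V i}.restrict
      (fun x : ↥(⋃ i, V i) => s (hmem x).choose ⟨x.1, (hmem x).choose_spec⟩) =
      fun y => s i ⟨y.1.1, y.2⟩ := by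
    funext y
    have hj := (hmem y.1).choose_spec
    have heq : (hmem y.1).choose = i := huniq y.1.1 _ _ hj y.2
    show s (hmem y.1).choose ⟨y.1.1, (hmem y.1).choose_spec⟩ = s i ⟨y.1.1, y.2⟩
    have aux : ∀ (c : ι) (hc : y.1.1 ∈ V c), c = i → s c ⟨y.1.1, hc⟩ = s i ⟨y.1.1, y.2⟩ := by
      rintro c hc rfl; rfl
    exact aux _ _ heq
  refine (congrArg Continuous key).mpr ?_
  have hv : Continuous fun y : ↥{y : ↥(⋃ i, V i) | y.1 ∈ V i} => y.1.1 := by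
    exact continuous_subtype_val.comp continuous_subtype_val
  exact (s i).continuous.comp (hv.subtype_mk _)

/-- Combine two open covers with property `S` on pairwise intersections into a cover
of size `k + n + 1` in a normal space. -/
lemma combine_covers {B : Type*} [TopologicalSpace B] [NormalSpace B] {k n : ℕ}
    (S : Set B → Prop)
    (hmono : ∀ {W W' : Set B}, W' ⊆ W → S W → S W')
    (hdisj : ∀ {ι : Type} (V : ι → Set B), (∀ i, IsOpen (V i)) →
      Pairwise (Function.onFun Disjoint V) → (∀ i, S (V i)) → S (⋃ i, V i))
    (A : Fin (k + 1) → Set B) (hAo : ∀ i, IsOpen (A i)) (hAc : (⋃ i, A i) = Set.univ)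
    (C : Fin (n + 1) → Set B) (hCo : ∀ j, IsOpen (C j)) (hCc : (⋃ j, C j) = Set.univ)
    (hS : ∀ i j, S (A i ∩ C j)) :
    ∃ W : Fin (k + n + 1) → Set B, (∀ m, IsOpen (W m)) ∧ (⋃ m, W m) = Set.univ ∧
      ∀ m, S (W m) := by
  classical
  obtain ⟨f, hf0, hf1, hf2⟩ := exists_cover_functions A hAo hAc
  obtain ⟨g, hg0, hg1, hg2⟩ := exists_cover_functions C hCo hCc
  set Vp : Fin (k + 1) × Fin (n + 1) → Set B := fun p =>
    {x | 0 < f p.1 x * g p.2 x ∧ ∀ q : Fin (k + 1) × Fin (n + 1),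
      ((q.1 : ℕ) + (q.2 : ℕ) = (p.1 : ℕ) + (p.2 : ℕ) ∧ q ≠ p) →
        f q.1 x * g q.2 x < f p.1 x * g p.2 x} with hVp
  have hVpo : ∀ p, IsOpen (Vp p) := by
    intro p
    have heq : Vp p = {x | 0 < f p.1 x * g p.2 x} ∩
        ⋂ q : Fin (k + 1) × Fin (n + 1),
          {x | ((q.1 : ℕ) + (q.2 : ℕ) = (p.1 : ℕ) + (p.2 : ℕ) ∧ q ≠ p) →
            f q.1 x * g q.2 x < f p.1 x * g p.2 x} := by
      ext x
      simp only [hVp, Set.mem_setOf_eq, Set.mem_inter_iff, Set.mem_iInter]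
    rw [heq]
    refine IsOpen.inter (isOpen_lt continuous_const
      ((f p.1).continuous.mul (g p.2).continuous)) (isOpen_iInter_of_finite fun q => ?_)
    by_cases hq : (q.1 : ℕ) + (q.2 : ℕ) = (p.1 : ℕ) + (p.2 : ℕ) ∧ q ≠ p
    · have h2 : {x : B | ((q.1 : ℕ) + (q.2 : ℕ) = (p.1 : ℕ) + (p.2 : ℕ) ∧ q ≠ p) →
          f q.1 x * g q.2 x < f p.1 x * g p.2 x} =
          {x : B | f q.1 x * g q.2 x < f p.1 x * g p.2 x} := by
        ext x; simp [hq]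
      rw [h2]
      exact isOpen_lt ((f q.1).continuous.mul (g q.2).continuous)
        ((f p.1).continuous.mul (g p.2).continuous)
    · have h2 : {x : B | ((q.1 : ℕ) + (q.2 : ℕ) = (p.1 : ℕ) + (p.2 : ℕ) ∧ q ≠ p) →
          f q.1 x * g q.2 x < f p.1 x * g p.2 x} = Set.univ := by
        ext x; simp only [Set.mem_setOf_eq, Set.mem_univ, iff_true]
        intro h; exact absurd h hq
      rw [h2]
      exact isOpen_univ
  have hVpsub : ∀ p, Vp p ⊆ A p.1 ∩ C p.2 := by
    intro p x hx
    have h1 : 0 < f p.1 x * g p.2 x := hx.1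
    have hfp : 0 < f p.1 x := by
      rcases lt_or_ge 0 (f p.1 x) with h | h
      · exact h
      · exfalso
        have h0 : f p.1 x = 0 := le_antisymm h (hf0 _ _)
        rw [h0, zero_mul] at h1
        exact lt_irrefl _ h1
    have hgp : 0 < g p.2 x := by
      rcases lt_or_ge 0 (g p.2 x) with h | h
      · exact h
      · exfalso
        have h0 : g p.2 x = 0 := le_antisymm h (hg0 _ _)
        rw [h0, mul_zero] at h1
        exact lt_irrefl _ h1
    exact ⟨hf1 _ _ hfp, hg1 _ _ hgp⟩
  set W : Fin (k + n + 1) → Set B := fun m =>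
    ⋃ (p : Fin (k + 1) × Fin (n + 1)) (_ : (p.1 : ℕ) + (p.2 : ℕ) = (m : ℕ)), Vp p with hW
  refine ⟨W, fun m => isOpen_iUnion fun p => isOpen_iUnion fun _ => hVpo p, ?_, ?_⟩
  · rw [Set.eq_univ_iff_forall]
    intro x
    obtain ⟨i, hi1, hi2⟩ := exists_max_idx (fun i => f i x)
    obtain ⟨j, hj1, hj2⟩ := exists_max_idx (fun j => g j x)
    have hfi : 0 < f i x := lt_of_lt_of_le (hf2 x).choose_spec (hi1 _)
    have hgj : 0 < g j x := lt_of_lt_of_le (hg2 x).choose_spec (hj1 _)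
    have hm : (i : ℕ) + (j : ℕ) < k + n + 1 := by
      have := i.isLt; have := j.isLt; omega
    have hxV : x ∈ Vp (i, j) := by
      refine ⟨mul_pos hfi hgj, ?_⟩
      rintro ⟨a, b⟩ ⟨hsum, hne⟩
      simp only at hsum ⊢
      rcases lt_trichotomy (a : ℕ) (i : ℕ) with h | h | h
      · have hb : (j : ℕ) < (b : ℕ) := by omega
        have hgb : g b x < g j x := hj2 b hb
        calc f a x * g b x ≤ f i x * g b x :=
              mul_le_mul_of_nonneg_right (hi1 a) (hg0 _ _)
          _ < f i x * g j x := mul_lt_mul_of_pos_left hgb hfi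
      · exfalso
        have hb : (b : ℕ) = (j : ℕ) := by omega
        exact hne (Prod.ext (Fin.ext h) (Fin.ext hb))
      · have hfa : f a x < f i x := hi2 a h
        calc f a x * g b x ≤ f a x * g j x :=
              mul_le_mul_of_nonneg_left (hj1 b) (hf0 _ _)
          _ < f i x * g j x := mul_lt_mul_of_pos_right hfa hgj
    have hxW : x ∈ W ⟨(i : ℕ) + (j : ℕ), hm⟩ :=
      Set.mem_iUnion.mpr ⟨(i, j), Set.mem_iUnion.mpr ⟨rfl, hxV⟩⟩
    exact Set.mem_iUnion.mpr ⟨⟨(i : ℕ) + (j : ℕ), hm⟩, hxW⟩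
  · intro m
    have hWm : W m = ⋃ q : {p : Fin (k + 1) × Fin (n + 1) //
        (p.1 : ℕ) + (p.2 : ℕ) = (m : ℕ)}, Vp q.1 := by
      ext x
      simp only [hW, Set.mem_iUnion]
      constructor
      · rintro ⟨p, hp, hx⟩; exact ⟨⟨p, hp⟩, hx⟩
      · rintro ⟨⟨p, hp⟩, hx⟩; exact ⟨p, hp, hx⟩
    rw [hWm]
    refine hdisj _ (fun q => hVpo q.1) ?_ (fun q => hmono (hVpsub q.1) (hS q.1.1 q.1.2))
    intro q q' hne
    have hpne : q.1 ≠ q'.1 := fun h => hne (Subtype.ext h)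
    rw [Function.onFun, Set.disjoint_left]
    intro x hx hx'
    have h1 := hx.2 q'.1 ⟨q'.2.trans q.2.symm, hpne.symm⟩
    have h2 := hx'.2 q.1 ⟨q.2.trans q'.2.symm, hpne⟩
    exact lt_asymm h1 h2

end normality

section orbithelpers

variable {G : Type*} [Group G] [TopologicalSpace G] [IsTopologicalGroup G]
variable {Y : Type*} [TopologicalSpace Y] [MulAction G Y]

lemma orbit_mk_eq_iff {y y' : Y} :
    Quotient.mk (MulAction.orbitRel G Y) y = Quotient.mk _ y' ↔ ∃ g : G, g • y' = y := by
  constructor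
  · intro h
    exact MulAction.mem_orbit_iff.mp (MulAction.orbitRel_apply.mp (Quotient.exact h))
  · rintro ⟨g, hg⟩
    exact Quotient.sound (MulAction.orbitRel_apply.mpr (MulAction.mem_orbit_iff.mpr ⟨g, hg⟩))

lemma free_unique {P : Type*} [TopologicalSpace P] [MulAction G P]
    (hfree : ∀ (g : G) (x : P), g • x = x → g = 1)
    {g g' : G} {p : P} (h : g • p = g' • p) : g = g' := by
  have h1 : (g'⁻¹ * g) • p = p := by
    rw [mul_smul, h, inv_smul_smul]
  have h2 := hfree _ _ h1
  have h3 : g' = g := by rwa [inv_mul_eq_one] at h2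
  exact h3.symm

lemma descend1 [ContinuousSMul G Y] {T : Type*} [TopologicalSpace T]
    (W : Set (Quotient (MulAction.orbitRel G Y)))
    (F : ↥(Quotient.mk (MulAction.orbitRel G Y) ⁻¹' W) → T) (hFc : Continuous F)
    (hFinv : ∀ (y y' : Y) (h : Quotient.mk (MulAction.orbitRel G Y) y ∈ W)
        (h' : Quotient.mk (MulAction.orbitRel G Y) y' ∈ W),
        Quotient.mk (MulAction.orbitRel G Y) y = Quotient.mk _ y' → F ⟨y, h⟩ = F ⟨y', h'⟩) :
    ∃ Fb : C(↥W, T), ∀ (y : Y) (h : Quotient.mk (MulAction.orbitRel G Y) y ∈ W),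
      Fb ⟨Quotient.mk _ y, h⟩ = F ⟨y, h⟩ := by
  classical
  have hout : ∀ c : ↥W, Quotient.mk (MulAction.orbitRel G Y) (Quotient.out c.1) ∈ W := by
    intro c; rw [Quotient.out_eq]; exact c.2
  have hcont : Continuous (fun c : ↥W => F ⟨Quotient.out c.1, hout c⟩) := by
    rw [continuous_def]
    intro O hO
    obtain ⟨O₂, hO₂, hpre⟩ := isOpen_induced_iff.mp (hFc.isOpen_preimage O hO)
    have key : (fun c : ↥W => F ⟨Quotient.out c.1, hout c⟩) ⁻¹' O = Subtype.val ⁻¹'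
        ((Quotient.mk (MulAction.orbitRel G Y)) '' O₂) := by
      ext c
      constructor
      · intro hc
        refine ⟨Quotient.out c.1, ?_, Quotient.out_eq _⟩
        have h2 : (⟨Quotient.out c.1, hout c⟩ :
            ↥(Quotient.mk (MulAction.orbitRel G Y) ⁻¹' W)) ∈ F ⁻¹' O := hc
        rw [← hpre] at h2
        exact h2
      · rintro ⟨z, hz, hzc⟩
        have hzW : Quotient.mk (MulAction.orbitRel G Y) z ∈ W := by
          rw [hzc]; exact c.2
        have hmem : (⟨z, hzW⟩ : ↥(Quotient.mk (MulAction.orbitRel G Y) ⁻¹' W))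
            ∈ Subtype.val ⁻¹' O₂ := hz
        rw [hpre] at hmem
        have heq : F ⟨Quotient.out c.1, hout c⟩ = F ⟨z, hzW⟩ :=
          hFinv _ _ _ _ (by rw [Quotient.out_eq, ← hzc])
        show F ⟨Quotient.out c.1, hout c⟩ ∈ O
        rw [heq]; exact hmem
    rw [key]
    exact ((MulAction.isOpenQuotientMap_quotientMk.isOpenMap _ hO₂).preimage
      continuous_subtype_val)
  exact ⟨⟨_, hcont⟩, fun y h => hFinv _ _ _ _ (by rw [Quotient.out_eq])⟩

lemma descend2 [ContinuousSMul G Y] {A T : Type*} [TopologicalSpace A] [TopologicalSpace T]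
    (W : Set (Quotient (MulAction.orbitRel G Y) × A))
    (F : ↥((fun za : Y × A => (Quotient.mk (MulAction.orbitRel G Y) za.1, za.2)) ⁻¹' W) → T)
    (hFc : Continuous F)
    (hFinv : ∀ (y y' : Y) (a : A)
        (h : (Quotient.mk (MulAction.orbitRel G Y) y, a) ∈ W)
        (h' : (Quotient.mk (MulAction.orbitRel G Y) y', a) ∈ W),
        Quotient.mk (MulAction.orbitRel G Y) y = Quotient.mk _ y' →
          F ⟨(y, a), h⟩ = F ⟨(y', a), h'⟩) :
    ∃ Fb : C(↥W, T), ∀ (y : Y) (a : A)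
      (h : (Quotient.mk (MulAction.orbitRel G Y) y, a) ∈ W),
      Fb ⟨(Quotient.mk _ y, a), h⟩ = F ⟨(y, a), h⟩ := by
  classical
  have hout : ∀ c : ↥W, ((Quotient.out c.1.1, c.1.2) : Y × A) ∈
      (fun za : Y × A => (Quotient.mk (MulAction.orbitRel G Y) za.1, za.2)) ⁻¹' W := by
    intro c
    show (Quotient.mk _ (Quotient.out c.1.1), c.1.2) ∈ W
    rw [Quotient.out_eq]
    exact c.2
  have hcont : Continuous (fun c : ↥W => F ⟨(Quotient.out c.1.1, c.1.2), hout c⟩) := by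
    rw [continuous_def]
    intro O hO
    obtain ⟨O₂, hO₂, hpre⟩ := isOpen_induced_iff.mp (hFc.isOpen_preimage O hO)
    have key : (fun c : ↥W => F ⟨(Quotient.out c.1.1, c.1.2), hout c⟩) ⁻¹' O =
        Subtype.val ⁻¹'
          ((fun za : Y × A => (Quotient.mk (MulAction.orbitRel G Y) za.1, za.2)) '' O₂) := by
      ext c
      constructor
      · intro hc
        refine ⟨(Quotient.out c.1.1, c.1.2), ?_, ?_⟩
        · have h2 : (⟨(Quotient.out c.1.1, c.1.2), hout c⟩ :
              ↥((fun za : Y × A => (Quotient.mk (MulAction.orbitRel G Y) za.1, za.2)) ⁻¹' W))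
              ∈ F ⁻¹' O := hc
          rw [← hpre] at h2
          exact h2
        · show (Quotient.mk _ (Quotient.out c.1.1), c.1.2) = c.1
          rw [Quotient.out_eq]
      · rintro ⟨⟨z, a⟩, hz, hzc⟩
        have hc1 : Quotient.mk (MulAction.orbitRel G Y) z = c.1.1 := congrArg Prod.fst hzc
        have hc2 : a = c.1.2 := congrArg Prod.snd hzc
        have hzW : ((z, c.1.2) : Y × A) ∈
            (fun za : Y × A => (Quotient.mk (MulAction.orbitRel G Y) za.1, za.2)) ⁻¹' W := by
          show (Quotient.mk _ z, c.1.2) ∈ W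
          rw [hc1]
          exact Set.mem_of_eq_of_mem (Prod.mk.eta).symm c.2
        have hmem : (⟨(z, c.1.2), hzW⟩ :
            ↥((fun za : Y × A => (Quotient.mk (MulAction.orbitRel G Y) za.1, za.2)) ⁻¹' W))
            ∈ Subtype.val ⁻¹' O₂ := by
          show ((z, c.1.2) : Y × A) ∈ O₂
          rw [← hc2]
          exact hz
        rw [hpre] at hmem
        have heq : F ⟨(Quotient.out c.1.1, c.1.2), hout c⟩ = F ⟨(z, c.1.2), hzW⟩ :=
          hFinv _ _ _ _ _ (by rw [Quotient.out_eq, hc1])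
        show F ⟨(Quotient.out c.1.1, c.1.2), hout c⟩ ∈ O
        rw [heq]
        exact hmem
    rw [key]
    have hπopen : IsOpenMap
        (fun za : Y × A => (Quotient.mk (MulAction.orbitRel G Y) za.1, za.2)) :=
      (MulAction.isOpenQuotientMap_quotientMk.isOpenMap).prodMap IsOpenMap.id
    exact (hπopen _ hO₂).preimage continuous_subtype_val
  refine ⟨⟨_, hcont⟩, fun y a h => ?_⟩
  exact hFinv (Quotient.out (Quotient.mk _ y)) y a _ h (by rw [Quotient.out_eq])

lemma exists_translation {P : Type*} [TopologicalSpace P] [MulAction G P] [ContinuousSMul G P]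
    (hfree : ∀ (g : G) (x : P), g • x = x → g = 1)
    (hloctriv : ∀ b : Quotient (MulAction.orbitRel G P),
      ∃ U : Set (Quotient (MulAction.orbitRel G P)), IsOpen U ∧ b ∈ U ∧
        ∃ φ : (↥U × G) ≃ₜ ↥(⇑(orbitQuotMap G P) ⁻¹' U),
          (∀ (u : ↥U) (g : G), orbitQuotMap G P ((φ (u, g) : P)) = (u : _)) ∧
          ∀ (u : ↥U) (g g' : G), ((φ (u, g' * g) : P)) = g' • ((φ (u, g) : P))) :
    ∃ tr : ↥{pq : P × P | Quotient.mk (MulAction.orbitRel G P) pq.1 = Quotient.mk _ pq.2} → G,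
      Continuous tr ∧
      ∀ (p q : P) (h : (p, q) ∈ {pq : P × P |
          Quotient.mk (MulAction.orbitRel G P) pq.1 = Quotient.mk _ pq.2}),
        tr ⟨(p, q), h⟩ • p = q := by
  classical
  set R : Set (P × P) :=
    {pq : P × P | Quotient.mk (MulAction.orbitRel G P) pq.1 = Quotient.mk _ pq.2} with hR
  have hex : ∀ x : ↥R, ∃ g : G, g • x.1.1 = x.1.2 := by
    intro x
    exact orbit_mk_eq_iff.mp x.2.symm
  refine ⟨fun x => (hex x).choose, ?_, fun p q h => (hex ⟨(p, q), h⟩).choose_spec⟩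
  rw [continuous_iff_continuousAt]
  intro x
  obtain ⟨U, hUo, hUx, φ, hφ1, hφ2⟩ := hloctriv (Quotient.mk _ x.1.1)
  set N : Set ↥R := {y : ↥R | Quotient.mk (MulAction.orbitRel G P) y.1.1 ∈ U} with hN
  have hNo : IsOpen N := by
    have hc : Continuous (fun y : ↥R => Quotient.mk (MulAction.orbitRel G P) y.1.1) :=
      continuous_quotient_mk'.comp (continuous_fst.comp continuous_subtype_val)
    exact hUo.preimage hc
  have hNx : x ∈ N := hUx
  apply ContinuousOn.continuousAt (s := N) ?_ (hNo.mem_nhds hNx)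
  rw [continuousOn_iff_continuous_restrict]
  have memp : ∀ y : ↥N, y.1.1.1 ∈ (⇑(orbitQuotMap G P) ⁻¹' U) := fun y => y.2
  have memq : ∀ y : ↥N, y.1.1.2 ∈ (⇑(orbitQuotMap G P) ⁻¹' U) := by
    intro y
    show Quotient.mk (MulAction.orbitRel G P) y.1.1.2 ∈ U
    rw [← y.1.2]
    exact y.2
  have formula : N.restrict (fun x : ↥R => (hex x).choose) = fun y : ↥N =>
      (φ.symm ⟨y.1.1.2, memq y⟩).2 * ((φ.symm ⟨y.1.1.1, memp y⟩).2)⁻¹ := by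
    funext y
    apply free_unique (p := y.1.1.1) hfree
    show (hex y.1).choose • y.1.1.1 = _
    rw [(hex y.1).choose_spec]
    set a1 := φ.symm ⟨y.1.1.1, memp y⟩ with ha1
    set a2 := φ.symm ⟨y.1.1.2, memq y⟩ with ha2
    have hp : ((φ a1 : ↥(⇑(orbitQuotMap G P) ⁻¹' U)) : P) = y.1.1.1 := by
      rw [ha1, φ.apply_symm_apply]
    have hq : ((φ a2 : ↥(⇑(orbitQuotMap G P) ⁻¹' U)) : P) = y.1.1.2 := by
      rw [ha2, φ.apply_symm_apply]
    have ha1eta : (a1.1, a1.2) = a1 := Prod.mk.eta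
    have ha2eta : (a2.1, a2.2) = a2 := Prod.mk.eta
    have hu : a2.1 = a1.1 := by
      apply Subtype.ext
      have e1 : orbitQuotMap G P ((φ (a1.1, a1.2) : P)) = (a1.1 : _) := hφ1 a1.1 a1.2
      have e2 : orbitQuotMap G P ((φ (a2.1, a2.2) : P)) = (a2.1 : _) := hφ1 a2.1 a2.2
      rw [ha1eta, hp] at e1
      rw [ha2eta, hq] at e2
      show (a2.1 : Quotient (MulAction.orbitRel G P)) = a1.1
      rw [← e1, ← e2]
      exact (y.1.2).symm
    calc y.1.1.2 = ((φ (a2.1, a2.2) : P)) := by rw [ha2eta, hq]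
      _ = ((φ (a1.1, a2.2) : P)) := by rw [hu]
      _ = ((φ (a1.1, (a2.2 * a1.2⁻¹) * a1.2) : P)) := by rw [inv_mul_cancel_right]
      _ = (a2.2 * a1.2⁻¹) • ((φ (a1.1, a1.2) : P)) := hφ2 a1.1 a1.2 (a2.2 * a1.2⁻¹)
      _ = (a2.2 * a1.2⁻¹) • y.1.1.1 := by rw [ha1eta, hp]
  refine (congrArg Continuous formula).mpr ?_
  have v1 : Continuous fun y : ↥N => y.1.1.1 := by
    exact continuous_fst.comp (continuous_subtype_val.comp continuous_subtype_val)
  have v2 : Continuous fun y : ↥N => y.1.1.2 := by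
    exact continuous_snd.comp (continuous_subtype_val.comp continuous_subtype_val)
  have c1 : Continuous (fun y : ↥N => (⟨y.1.1.2, memq y⟩ : ↥(⇑(orbitQuotMap G P) ⁻¹' U))) :=
    v2.subtype_mk _
  have c2 : Continuous (fun y : ↥N => (⟨y.1.1.1, memp y⟩ : ↥(⇑(orbitQuotMap G P) ⁻¹' U))) :=
    v1.subtype_mk _
  have d1 : Continuous fun y : ↥N => (φ.symm ⟨y.1.1.2, memq y⟩).2 :=
    continuous_snd.comp (φ.symm.continuous.comp c1)
  have d2 : Continuous fun y : ↥N => (φ.symm ⟨y.1.1.1, memp y⟩).2 :=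
    continuous_snd.comp (φ.symm.continuous.comp c2)
  exact d1.mul d2.inv

end orbithelpers

section mainlemmas

variable {G Y Z₀ P : Type*} [Group G] [TopologicalSpace G] [IsTopologicalGroup G]
  [TopologicalSpace Y] [MulAction G Y] [ContinuousSMul G Y]
  [TopologicalSpace Z₀] [MulAction G Z₀] [ContinuousSMul G Z₀]
  [TopologicalSpace P] [MulAction G P] [ContinuousSMul G P]

lemma inducedQuotMap_mk {A B : Type*} [TopologicalSpace A] [TopologicalSpace B]
    [MulAction G A] [MulAction G B] (F : C(A, B))
    (hF : ∀ (g : G) (a : A), F (g • a) = g • F a) (a : A) :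
    inducedQuotMap (G := G) F hF (Quotient.mk _ a) = Quotient.mk _ (F a) := rfl

lemma ineq1
    (hfree : ∀ (g : G) (x : P), g • x = x → g = 1)
    (hloctriv : ∀ b : Quotient (MulAction.orbitRel G P),
      ∃ U : Set (Quotient (MulAction.orbitRel G P)), IsOpen U ∧ b ∈ U ∧
        ∃ φ : (↥U × G) ≃ₜ ↥(⇑(orbitQuotMap G P) ⁻¹' U),
          (∀ (u : ↥U) (g : G), orbitQuotMap G P ((φ (u, g) : P)) = (u : _)) ∧
          ∀ (u : ↥U) (g g' : G), ((φ (u, g' * g) : P)) = g' • ((φ (u, g) : P)))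
    (F : C(Y, Z₀))
    (hind : ∀ (g : G) (z : Y × P), (F.prodMap (ContinuousMap.id P)) (g • z) =
      g • (F.prodMap (ContinuousMap.id P)) z) :
    secatf (F.prodMap (ContinuousMap.id P)) (orbitQuotMap G (Z₀ × P)) ≤
      secat (inducedQuotMap (G := G) (F.prodMap (ContinuousMap.id P)) hind) := by
  apply sInf_le_sInf
  rintro n ⟨m, rfl, U, hUo, hUc, hUs⟩
  obtain ⟨tr, htrc, htr⟩ := exists_translation hfree hloctriv
  set W : Set (Quotient (MulAction.orbitRel G (Y × P)) × P) :=
    {ca | inducedQuotMap (G := G) (⟨Prod.snd, continuous_snd⟩ : C(Y × P, P))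
        (fun g z => rfl) ca.1 = Quotient.mk (MulAction.orbitRel G P) ca.2} with hW
  have hwm : ∀ w : ↥((fun za : (Y × P) × P =>
      (Quotient.mk (MulAction.orbitRel G (Y × P)) za.1, za.2)) ⁻¹' W),
      Quotient.mk (MulAction.orbitRel G P) w.1.1.2 = Quotient.mk _ w.1.2 := fun w => w.2
  have hΨc : Continuous (fun w : ↥((fun za : (Y × P) × P =>
      (Quotient.mk (MulAction.orbitRel G (Y × P)) za.1, za.2)) ⁻¹' W) =>
        tr ⟨(w.1.1.2, w.1.2), hwm w⟩ • w.1.1) := by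
    have v1 : Continuous fun w : ↥((fun za : (Y × P) × P =>
        (Quotient.mk (MulAction.orbitRel G (Y × P)) za.1, za.2)) ⁻¹' W) => w.1.1 := by
      exact continuous_fst.comp continuous_subtype_val
    have v2 : Continuous fun w : ↥((fun za : (Y × P) × P =>
        (Quotient.mk (MulAction.orbitRel G (Y × P)) za.1, za.2)) ⁻¹' W) => w.1.2 := by
      exact continuous_snd.comp continuous_subtype_val
    exact ((htrc.comp ((v1.snd.prodMk v2).subtype_mk _))).smul v1
  obtain ⟨Φ, hΦ⟩ := descend2 (G := G) W
    (fun w => tr ⟨(w.1.1.2, w.1.2), hwm w⟩ • w.1.1) hΨc (by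
      intro e e' a h h' hmk
      obtain ⟨g, hg⟩ := orbit_mk_eq_iff.mp hmk
      subst hg
      have hscal : tr ⟨((g • e').2, a), hwm ⟨(g • e', a), h⟩⟩ =
          tr ⟨(e'.2, a), hwm ⟨(e', a), h'⟩⟩ * g⁻¹ := by
        apply free_unique (p := (g • e').2) hfree
        rw [htr]
        show a = _
        rw [mul_smul]
        show a = tr ⟨(e'.2, a), hwm ⟨(e', a), h'⟩⟩ • (g⁻¹ • (g • e'.2))
        rw [inv_smul_smul, htr]
      show tr ⟨((g • e').2, a), hwm ⟨(g • e', a), h⟩⟩ • (g • e') = _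
      rw [hscal, mul_smul, inv_smul_smul])
  have hΦprop : ∀ c : ↥W, Quotient.mk (MulAction.orbitRel G (Y × P)) (Φ c) = c.1.1 ∧
      (Φ c).2 = c.1.2 := by
    rintro ⟨⟨cq, a⟩, hc⟩
    obtain ⟨e, rfl⟩ := Quotient.exists_rep cq
    rw [hΦ e a hc]
    constructor
    · exact orbit_mk_eq_iff.mpr ⟨_, rfl⟩
    · show tr ⟨(e.2, a), hwm ⟨(e, a), hc⟩⟩ • e.2 = a
      rw [htr]
  refine ⟨m, rfl, U, hUo, by rw [hUc]; exact Set.subset_univ _, fun i => ?_⟩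
  obtain ⟨s, hs⟩ := hUs i
  have key2 : ∀ (z : Z₀ × P) (c : Quotient (MulAction.orbitRel G (Y × P))),
      inducedQuotMap (G := G) (F.prodMap (ContinuousMap.id P)) hind c =
        Quotient.mk _ z → (c, z.2) ∈ W := by
    intro z c hc
    obtain ⟨e, rfl⟩ := Quotient.exists_rep c
    rw [inducedQuotMap_mk] at hc
    obtain ⟨g, hg⟩ := orbit_mk_eq_iff.mp hc
    show Quotient.mk (MulAction.orbitRel G P) e.2 = Quotient.mk _ z.2
    exact orbit_mk_eq_iff.mpr ⟨g, congrArg Prod.snd hg⟩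
  have hmem : ∀ z : ↥(⇑(orbitQuotMap G (Z₀ × P)) ⁻¹' U i),
      ((s ⟨Quotient.mk _ z.1, z.2⟩ : Quotient (MulAction.orbitRel G (Y × P))), z.1.2) ∈ W :=
    fun z => key2 z.1 _ (hs ⟨Quotient.mk _ z.1, z.2⟩)
  refine ⟨⟨fun z => Φ ⟨(s ⟨Quotient.mk _ z.1, z.2⟩, z.1.2), hmem z⟩, ?_⟩, ?_⟩
  · have v0 : Continuous fun z : ↥(⇑(orbitQuotMap G (Z₀ × P)) ⁻¹' U i) => z.1 :=
      continuous_subtype_val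
    have v1 : Continuous fun z : ↥(⇑(orbitQuotMap G (Z₀ × P)) ⁻¹' U i) =>
        (⟨Quotient.mk _ z.1, z.2⟩ : ↥(U i)) :=
      (continuous_quotient_mk'.comp v0).subtype_mk _
    exact Φ.continuous.comp
      (((s.continuous.comp v1).prodMk v0.snd).subtype_mk _)
  · intro z
    have hp1 := (hΦprop ⟨(s ⟨Quotient.mk _ z.1, z.2⟩, z.1.2), hmem z⟩).1
    have hp2 := (hΦprop ⟨(s ⟨Quotient.mk _ z.1, z.2⟩, z.1.2), hmem z⟩).2
    have h1 : Quotient.mk (MulAction.orbitRel G (Z₀ × P))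
        ((F.prodMap (ContinuousMap.id P)) (Φ ⟨(s ⟨Quotient.mk _ z.1, z.2⟩, z.1.2), hmem z⟩)) =
        Quotient.mk _ z.1 := by
      rw [← inducedQuotMap_mk (G := G) _ hind, hp1]
      exact hs ⟨Quotient.mk _ z.1, z.2⟩
    obtain ⟨g, hg⟩ := orbit_mk_eq_iff.mp h1
    have h3 : g • z.1.2 = z.1.2 := by
      have h4 := congrArg Prod.snd hg
      exact h4.trans hp2
    have hg1 : g = 1 := hfree g z.1.2 h3
    rw [hg1, one_smul] at hg
    exact hg.symm

lemma ineq2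
    (hfree : ∀ (g : G) (x : P), g • x = x → g = 1)
    (hloctriv : ∀ b : Quotient (MulAction.orbitRel G P),
      ∃ U : Set (Quotient (MulAction.orbitRel G P)), IsOpen U ∧ b ∈ U ∧
        ∃ φ : (↥U × G) ≃ₜ ↥(⇑(orbitQuotMap G P) ⁻¹' U),
          (∀ (u : ↥U) (g : G), orbitQuotMap G P ((φ (u, g) : P)) = (u : _)) ∧
          ∀ (u : ↥U) (g g' : G), ((φ (u, g' * g) : P)) = g' • ((φ (u, g) : P)))
    (F : C(Y, Z₀))
    (hind : ∀ (g : G) (z : Y × P), (F.prodMap (ContinuousMap.id P)) (g • z) =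
      g • (F.prodMap (ContinuousMap.id P)) z)
    [NormalSpace (Quotient (MulAction.orbitRel G (Z₀ × P)))] :
    secat (inducedQuotMap (G := G) (F.prodMap (ContinuousMap.id P)) hind) ≤
      secat (orbitQuotMap G P) +
        secatf (F.prodMap (ContinuousMap.id P)) (orbitQuotMap G (Z₀ × P)) := by
  by_cases hτ : secat (orbitQuotMap G P) = ⊤
  · rw [hτ, top_add]; exact le_top
  by_cases hsf : secatf (F.prodMap (ContinuousMap.id P)) (orbitQuotMap G (Z₀ × P)) = ⊤
  · rw [hsf, add_top]; exact le_top
  have hτmem : secat (orbitQuotMap G P) ∈ {n : ℕ∞ | ∃ m : ℕ, n = m ∧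
      ∃ U : Fin (m + 1) → Set (Quotient (MulAction.orbitRel G P)),
      (∀ i, IsOpen (U i)) ∧ (⋃ i, U i) = Set.univ ∧
      ∀ i, ∃ s : C((U i : Set (Quotient (MulAction.orbitRel G P))), P),
        ∀ x, (orbitQuotMap G P) (s x) = (x : Quotient (MulAction.orbitRel G P))} := by
    unfold secat
    apply csInf_mem
    rw [Set.nonempty_iff_ne_empty]
    intro h
    exact hτ (by unfold secat; rw [h, sInf_empty])
  have hsfmem : secatf (F.prodMap (ContinuousMap.id P)) (orbitQuotMap G (Z₀ × P)) ∈
      {n : ℕ∞ | ∃ m : ℕ, n = m ∧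
      ∃ U : Fin (m + 1) → Set (Quotient (MulAction.orbitRel G (Z₀ × P))),
      (∀ i, IsOpen (U i)) ∧ Set.range ⇑(orbitQuotMap G (Z₀ × P)) ⊆ (⋃ i, U i) ∧
      ∀ i, ∃ s : C((⇑(orbitQuotMap G (Z₀ × P)) ⁻¹' U i : Set (Z₀ × P)), Y × P),
        ∀ x, (F.prodMap (ContinuousMap.id P)) (s x) = (x : Z₀ × P)} := by
    unfold secatf
    apply csInf_mem
    rw [Set.nonempty_iff_ne_empty]
    intro h
    exact hsf (by unfold secatf; rw [h, sInf_empty])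
  obtain ⟨nτ, hτeq, V, hVo, hVc, hVs⟩ := hτmem
  obtain ⟨kF, hkeq, U, hUo, hUc, hUs⟩ := hsfmem
  rw [hτeq, hkeq, ← Nat.cast_add]
  obtain ⟨tr, htrc, htr⟩ := exists_translation hfree hloctriv
  set prbar : C(Quotient (MulAction.orbitRel G (Z₀ × P)), Quotient (MulAction.orbitRel G P)) :=
    inducedQuotMap (G := G) (⟨Prod.snd, continuous_snd⟩ : C(Z₀ × P, P)) (fun g z => rfl)
    with hprbar
  set A : Fin (nτ + 1) → Set (Quotient (MulAction.orbitRel G (Z₀ × P))) :=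
    fun j => ⇑prbar ⁻¹' (V j) with hA
  have hAo : ∀ j, IsOpen (A j) := fun j => (hVo j).preimage prbar.continuous
  have hAc : (⋃ j, A j) = Set.univ := by
    rw [Set.eq_univ_iff_forall]
    intro c
    have hcV : prbar c ∈ ⋃ j, V j := by rw [hVc]; trivial
    obtain ⟨j, hj⟩ := Set.mem_iUnion.mp hcV
    exact Set.mem_iUnion.mpr ⟨j, hj⟩
  have hUc' : (⋃ i, U i) = Set.univ := by
    rw [Set.eq_univ_iff_forall]
    intro c
    obtain ⟨z, rfl⟩ := Quotient.exists_rep c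
    exact hUc ⟨z, rfl⟩
  have hS : ∀ (j : Fin (nτ + 1)) (i : Fin (kF + 1)),
      ∃ s : C(↥(A j ∩ U i), Quotient (MulAction.orbitRel G (Y × P))),
        ∀ x, (inducedQuotMap (G := G) (F.prodMap (ContinuousMap.id P)) hind) (s x) = x.1 := by
    intro j i
    obtain ⟨sτ, hsτ⟩ := hVs j
    obtain ⟨sg, hsg⟩ := hUs i
    have h1 : ∀ z : ↥(Quotient.mk (MulAction.orbitRel G (Z₀ × P)) ⁻¹' (A j ∩ U i)),
        Quotient.mk (MulAction.orbitRel G P) z.1.2 ∈ V j := fun z => z.2.1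
    have h2 : ∀ z : ↥(Quotient.mk (MulAction.orbitRel G (Z₀ × P)) ⁻¹' (A j ∩ U i)),
        Quotient.mk (MulAction.orbitRel G P) z.1.2 =
          Quotient.mk _ (sτ ⟨Quotient.mk _ z.1.2, h1 z⟩) :=
      fun z => (hsτ ⟨Quotient.mk _ z.1.2, h1 z⟩).symm
    have h3 : ∀ z : ↥(Quotient.mk (MulAction.orbitRel G (Z₀ × P)) ⁻¹' (A j ∩ U i)),
        (tr ⟨(z.1.2, sτ ⟨Quotient.mk _ z.1.2, h1 z⟩), h2 z⟩) • z.1 ∈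
          ⇑(orbitQuotMap G (Z₀ × P)) ⁻¹' U i := by
      intro z
      show Quotient.mk (MulAction.orbitRel G (Z₀ × P)) (_ • z.1) ∈ U i
      rw [orbit_mk_eq_iff.mpr ⟨_, rfl⟩]
      exact z.2.2
    have hΘc : Continuous (fun z : ↥(Quotient.mk (MulAction.orbitRel G (Z₀ × P)) ⁻¹'
        (A j ∩ U i)) => Quotient.mk (MulAction.orbitRel G (Y × P))
          (sg ⟨(tr ⟨(z.1.2, sτ ⟨Quotient.mk _ z.1.2, h1 z⟩), h2 z⟩) • z.1, h3 z⟩)) := by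
      have v0 : Continuous fun z : ↥(Quotient.mk (MulAction.orbitRel G (Z₀ × P)) ⁻¹'
          (A j ∩ U i)) => z.1 := continuous_subtype_val
      have vb : Continuous fun z : ↥(Quotient.mk (MulAction.orbitRel G (Z₀ × P)) ⁻¹'
          (A j ∩ U i)) => (⟨Quotient.mk _ z.1.2, h1 z⟩ : ↥(V j)) :=
        (continuous_quotient_mk'.comp v0.snd).subtype_mk _
      have vd : Continuous fun z : ↥(Quotient.mk (MulAction.orbitRel G (Z₀ × P)) ⁻¹'
          (A j ∩ U i)) => tr ⟨(z.1.2, sτ ⟨Quotient.mk _ z.1.2, h1 z⟩), h2 z⟩ :=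
        htrc.comp ((v0.snd.prodMk (sτ.continuous.comp vb)).subtype_mk _)
      exact continuous_quotient_mk'.comp
        (sg.continuous.comp ((vd.smul v0).subtype_mk _))
    obtain ⟨sb, hsb⟩ := descend1 (G := G) (A j ∩ U i)
      (fun z => Quotient.mk (MulAction.orbitRel G (Y × P))
        (sg ⟨(tr ⟨(z.1.2, sτ ⟨Quotient.mk _ z.1.2, h1 z⟩), h2 z⟩) • z.1, h3 z⟩)) hΘc (by
        intro z z' hz hz' hmk
        obtain ⟨g, hg⟩ := orbit_mk_eq_iff.mp hmk
        subst hg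
        refine congrArg _ (congrArg _ (Subtype.ext ?_))
        have hu : (⟨Quotient.mk _ (⟨g • z', hz⟩ : ↥(Quotient.mk
              (MulAction.orbitRel G (Z₀ × P)) ⁻¹' (A j ∩ U i))).1.2,
              h1 ⟨g • z', hz⟩⟩ : ↥(V j)) = ⟨Quotient.mk _ z'.2, h1 ⟨z', hz'⟩⟩ :=
          Subtype.ext (orbit_mk_eq_iff.mpr ⟨g, rfl⟩)
        have hsq : sτ ⟨Quotient.mk _ (g • z').2, h1 ⟨g • z', hz⟩⟩ =
            sτ ⟨Quotient.mk _ z'.2, h1 ⟨z', hz'⟩⟩ := congrArg _ hu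
        have hscal : tr ⟨((g • z').2, sτ ⟨Quotient.mk _ (g • z').2, h1 ⟨g • z', hz⟩⟩),
              h2 ⟨g • z', hz⟩⟩ =
            tr ⟨(z'.2, sτ ⟨Quotient.mk _ z'.2, h1 ⟨z', hz'⟩⟩), h2 ⟨z', hz'⟩⟩ * g⁻¹ := by
          apply free_unique (p := (g • z').2) hfree
          rw [htr, hsq, mul_smul]
          show sτ ⟨Quotient.mk _ z'.2, h1 ⟨z', hz'⟩⟩ = _ • (g⁻¹ • (g • z'.2))
          rw [inv_smul_smul, htr]
        show tr ⟨((g • z').2, sτ ⟨Quotient.mk _ (g • z').2, h1 ⟨g • z', hz⟩⟩),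
            h2 ⟨g • z', hz⟩⟩ • (g • z') = _
        rw [hscal, mul_smul, inv_smul_smul])
    refine ⟨sb, ?_⟩
    rintro ⟨cq, hc⟩
    obtain ⟨z, rfl⟩ := Quotient.exists_rep cq
    rw [hsb z hc]
    show inducedQuotMap (G := G) (F.prodMap (ContinuousMap.id P)) hind
        (Quotient.mk _ (sg ⟨_ • z, h3 ⟨z, hc⟩⟩)) = Quotient.mk _ z
    rw [inducedQuotMap_mk, hsg]
    exact orbit_mk_eq_iff.mpr ⟨_, rfl⟩
  obtain ⟨Wc, hWo, hWcov, hWs⟩ := combine_covers (k := nτ) (n := kF)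
    (fun Wset => ∃ s : C(↥Wset, Quotient (MulAction.orbitRel G (Y × P))),
      ∀ x, (inducedQuotMap (G := G) (F.prodMap (ContinuousMap.id P)) hind) (s x) = x.1)
    (by
      rintro W1 W2 hsub ⟨s, hs⟩
      exact ⟨s.comp ⟨Set.inclusion hsub, continuous_inclusion hsub⟩, fun x => hs _⟩)
    (by
      intro ι Vd ho hd hs
      exact glue_sections _ Vd ho hd hs)
    A hAo hAc U hUo hUc' hS
  unfold secat
  apply sInf_le
  exact ⟨nτ + kF, rfl, Wc, hWo, hWcov, fun m => hWs m⟩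

end mainlemmas

/-- Let `G` be a topological group acting continuously on `X` and acting
continuously and freely on `P` so that `τ : P → B = P/G` is a locally trivial principal
`G`-bundle, let `r ≥ 2`, and assume that `(X^r × P)/G` is normal.  For the map
`ρ_r ×_G 1 : (C([0,1],X) × P)/G → (X^r × P)/G` induced on orbit spaces by `ρ_r × id_P`,
one has `TC^w_{r,G}(X;P) ≤ secat[ρ_r ×_G 1] ≤ secat[τ] + TC^w_{r,G}(X;P)`, where
`TC^w_{r,G}(X;P) = secat_Q[ρ_r × id_P]` and `Q : X^r × P → (X^r × P)/G` is the quotient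
map. -/
theorem weak_eqTC_rel_le_secat_le_add {G X P : Type*} [Group G] [TopologicalSpace G]
    [IsTopologicalGroup G] [TopologicalSpace X] [MulAction G X] [ContinuousSMul G X]
    [TopologicalSpace P] [MulAction G P] [ContinuousSMul G P]
    (hfree : ∀ (g : G) (x : P), g • x = x → g = 1)
    (hloctriv : ∀ b : Quotient (MulAction.orbitRel G P),
      ∃ U : Set (Quotient (MulAction.orbitRel G P)), IsOpen U ∧ b ∈ U ∧
        ∃ φ : (↥U × G) ≃ₜ ↥(⇑(orbitQuotMap G P) ⁻¹' U),
          (∀ (u : ↥U) (g : G), orbitQuotMap G P ((φ (u, g) : P)) = (u : _)) ∧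
          ∀ (u : ↥U) (g g' : G), ((φ (u, g' * g) : P)) = g' • ((φ (u, g) : P)))
    {r : ℕ} (hr : 2 ≤ r) (t : Fin r → unitInterval) (htm : StrictMono t)
    (ht0 : t ⟨0, by omega⟩ = 0) (ht1 : t ⟨r - 1, by omega⟩ = 1)
    [NormalSpace (Quotient (MulAction.orbitRel G ((Fin r → X) × P)))] :
    secatf ((pathEval X t).prodMap (ContinuousMap.id P))
        (orbitQuotMap G ((Fin r → X) × P)) ≤
      secat (inducedQuotMap (G := G) ((pathEval X t).prodMap (ContinuousMap.id P))
        (fun g z => by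
          ext i
          · simp [pathEval]
          · simp)) ∧
    secat (inducedQuotMap (G := G) ((pathEval X t).prodMap (ContinuousMap.id P))
        (fun g z => by
          ext i
          · simp [pathEval]
          · simp)) ≤
      secat (orbitQuotMap G P) +
        secatf ((pathEval X t).prodMap (ContinuousMap.id P))
          (orbitQuotMap G ((Fin r → X) × P)) := by
  constructor
  · exact ineq1 hfree hloctriv (pathEval X t) _
  · exact ineq2 hfree hloctriv (pathEval X t) _
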